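/- The function h₁(x) = −π/2 + 2 arctan(eˣ) is a solution of the ODE h'' + (1/2)(1−a²) sin(2h)/(a²cos²h+sin²h)·h'² − (1−a²) tanh(x)/(a²+sinh²x)·h' − (k−2) tanh(x)·h' + ((k−1)/2)·(a² sech²x + tanh²x)/(a²cos²h+sin²h)·sin(2h) = 0 for every k ∈ ℕ and every a ≠ 0. -/

import Mathlib

open Real

lemma hder (x : ℝ) :
    HasDerivAt (fun y : ℝ => -(Real.pi / 2) + 2 * Real.arctan (Real.exp y))
      (1 / Real.cosh x) x := by
  have h1 : HasDerivAt (fun y : ℝ => Real.arctan (Real.exp y))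
      (1 / (1 + Real.exp x ^ 2) * Real.exp x) x :=
    (Real.hasDerivAt_arctan (Real.exp x)).comp x (Real.hasDerivAt_exp x)
  have h2 := (h1.const_mul 2).const_add (-(Real.pi / 2))
  refine h2.congr_deriv ?_
  rw [Real.cosh_eq, Real.exp_neg]
  have he := Real.exp_ne_zero x
  have hp : (0:ℝ) < 1 + Real.exp x ^ 2 := by positivity
  field_simp
  ring

lemma hsin (x : ℝ) :
    Real.sin (-(Real.pi / 2) + 2 * Real.arctan (Real.exp x)) = Real.tanh x := by
  have h : -(Real.pi / 2) + 2 * Real.arctan (Real.exp x)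
      = 2 * Real.arctan (Real.exp x) - Real.pi / 2 := by ring
  rw [h, Real.sin_sub_pi_div_two, Real.cos_two_mul, Real.cos_sq_arctan,
    Real.tanh_eq_sinh_div_cosh, Real.sinh_eq, Real.cosh_eq, Real.exp_neg]
  have he := Real.exp_ne_zero x
  have hp : (0:ℝ) < 1 + Real.exp x ^ 2 := by positivity
  field_simp
  ring

lemma hcos (x : ℝ) :
    Real.cos (-(Real.pi / 2) + 2 * Real.arctan (Real.exp x)) = 1 / Real.cosh x := by
  have h : -(Real.pi / 2) + 2 * Real.arctan (Real.exp x)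
      = 2 * Real.arctan (Real.exp x) - Real.pi / 2 := by ring
  rw [h, Real.cos_sub_pi_div_two, Real.sin_two_mul, Real.sin_arctan, Real.cos_arctan,
    Real.cosh_eq, Real.exp_neg]
  have he := Real.exp_ne_zero x
  have hp : (0:ℝ) < 1 + Real.exp x ^ 2 := by positivity
  have hs : Real.sqrt (1 + Real.exp x ^ 2) * Real.sqrt (1 + Real.exp x ^ 2)
      = 1 + Real.exp x ^ 2 := Real.mul_self_sqrt hp.le
  have hsne : Real.sqrt (1 + Real.exp x ^ 2) ≠ 0 := by positivity
  field_simp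
  nlinarith [hs]

/-- h₁(x) = −π/2 + 2 arctan(eˣ) solves the ellipsoid Euler–Lagrange equation with
d = 1 (so d(d+k−2) = k−1) for every k ∈ ℕ and every a ≠ 0. -/
theorem stmt11 (k : ℕ) (a : ℝ) (ha : a ≠ 0) :
    ∀ x : ℝ,
      deriv (deriv (fun y : ℝ => -(Real.pi / 2) + 2 * Real.arctan (Real.exp y))) x
      + (1 / 2) * (1 - a ^ 2)
          * Real.sin (2 * (-(Real.pi / 2) + 2 * Real.arctan (Real.exp x)))
          / (a ^ 2 * Real.cos (-(Real.pi / 2) + 2 * Real.arctan (Real.exp x)) ^ 2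
            + Real.sin (-(Real.pi / 2) + 2 * Real.arctan (Real.exp x)) ^ 2)
          * (deriv (fun y : ℝ => -(Real.pi / 2) + 2 * Real.arctan (Real.exp y)) x) ^ 2
      - (1 - a ^ 2) * Real.tanh x / (a ^ 2 + Real.sinh x ^ 2)
          * deriv (fun y : ℝ => -(Real.pi / 2) + 2 * Real.arctan (Real.exp y)) x
      - ((k : ℝ) - 2) * Real.tanh x
          * deriv (fun y : ℝ => -(Real.pi / 2) + 2 * Real.arctan (Real.exp y)) x
      + (((k : ℝ) - 1) / 2) * (a ^ 2 * (1 / Real.cosh x) ^ 2 + Real.tanh x ^ 2)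
          / (a ^ 2 * Real.cos (-(Real.pi / 2) + 2 * Real.arctan (Real.exp x)) ^ 2
            + Real.sin (-(Real.pi / 2) + 2 * Real.arctan (Real.exp x)) ^ 2)
          * Real.sin (2 * (-(Real.pi / 2) + 2 * Real.arctan (Real.exp x))) = 0 := by
  intro x
  have hd : deriv (fun y : ℝ => -(Real.pi / 2) + 2 * Real.arctan (Real.exp y))
      = fun y => 1 / Real.cosh y := funext fun y => (hder y).deriv
  have hc := Real.cosh_pos x
  have hd2 : deriv (fun y : ℝ => 1 / Real.cosh y) x
      = -Real.sinh x / Real.cosh x ^ 2 := by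
    have : HasDerivAt (fun y : ℝ => (Real.cosh y)⁻¹)
        (-Real.sinh x / Real.cosh x ^ 2) x := by
      exact (Real.hasDerivAt_cosh x).inv (Real.cosh_pos x).ne'
    simpa [one_div] using this.deriv
  have hsin2 : Real.sin (2 * (-(Real.pi / 2) + 2 * Real.arctan (Real.exp x)))
      = 2 * Real.tanh x * (1 / Real.cosh x) := by
    rw [Real.sin_two_mul, hsin, hcos]
  rw [hd, hd2, hsin x, hcos x, hsin2]
  have hc2 : Real.cosh x ^ 2 = 1 + Real.sinh x ^ 2 := by
    have := Real.cosh_sq x; linarith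
  have ht : Real.tanh x = Real.sinh x / Real.cosh x := Real.tanh_eq_sinh_div_cosh x
  have ha2 : (0:ℝ) < a ^ 2 + Real.sinh x ^ 2 := by positivity
  rw [ht]
  have hD : a ^ 2 * (1 / Real.cosh x) ^ 2 + (Real.sinh x / Real.cosh x) ^ 2 ≠ 0 := by
    have : a ^ 2 * (1 / Real.cosh x) ^ 2 + (Real.sinh x / Real.cosh x) ^ 2
        = (a ^ 2 + Real.sinh x ^ 2) / Real.cosh x ^ 2 := by field_simp
    rw [this]; positivity
  field_simp
  nlinarith [hc2, sq_nonneg (Real.sinh x), sq_nonneg a]
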